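/- arXiv:2602.10841 — 4 statements merged into one kernel-verified Lean document; each statement's English description precedes it below -/
import Mathlib

section
/- For any constants α₁, α₂ ∈ [0,1) and any t, λ > 0, one has ∫₀ᵗ s^{-α₁}(t-s)^{-α₂} e^{-λ(t-s)} ds ≤ (1/(1-α₁)) t^{-α₁} ∫₀ᵗ s^{-α₂} e^{-λ s} ds. -/
open MeasureTheory

lemma fkg_aux (μ : Measure ℝ) [IsFiniteMeasure μ] (f g : ℝ → ℝ)
    (hfg : ∀ᵐ z ∂(μ.prod μ), (f z.1 - f z.2) * (g z.1 - g z.2) ≤ 0)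
    (hf : Integrable f μ) (hg : Integrable g μ)
    (hI : Integrable (fun x => f x * g x) μ) :
    (μ Set.univ).toReal * ∫ x, f x * g x ∂μ ≤ (∫ x, f x ∂μ) * (∫ x, g x ∂μ) := by
  have hc : Integrable (fun _ : ℝ => (1:ℝ)) μ := integrable_const 1
  have i1 : Integrable (fun z : ℝ × ℝ => f z.1 * g z.2) (μ.prod μ) := hf.mul_prod hg
  have i2 : Integrable (fun z : ℝ × ℝ => g z.1 * f z.2) (μ.prod μ) := hg.mul_prod hf
  have i3 : Integrable (fun z : ℝ × ℝ => (f z.1 * g z.1) * (1:ℝ)) (μ.prod μ) := hI.mul_prod hc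
  have i4 : Integrable (fun z : ℝ × ℝ => (1:ℝ) * (f z.2 * g z.2)) (μ.prod μ) := hc.mul_prod hI
  have I34 : Integrable (fun z : ℝ × ℝ => f z.1 * g z.1 * 1 + 1 * (f z.2 * g z.2))
      (μ.prod μ) := i3.add i4
  have I12 : Integrable (fun z : ℝ × ℝ => f z.1 * g z.2 + g z.1 * f z.2) (μ.prod μ) :=
    i1.add i2
  have hle : ∫ z, (f z.1 - f z.2) * (g z.1 - g z.2) ∂(μ.prod μ) ≤ 0 :=
    integral_nonpos_of_ae hfg
  have hexp : (fun z : ℝ × ℝ => (f z.1 - f z.2) * (g z.1 - g z.2))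
      = fun z : ℝ × ℝ =>
        ((f z.1 * g z.1) * 1 + 1 * (f z.2 * g z.2)) - (f z.1 * g z.2 + g z.1 * f z.2) := by
    funext z; ring
  rw [hexp, integral_sub I34 I12, integral_add i3 i4, integral_add i1 i2,
    integral_prod_mul, integral_prod_mul,
    integral_prod_mul (fun x => f x * g x) (fun _ : ℝ => (1:ℝ)),
    integral_prod_mul (fun _ : ℝ => (1:ℝ)) (fun x => f x * g x),
    integral_const] at hle
  simp only [smul_eq_mul, mul_one, measureReal_def] at hle
  nlinarith [hle]

lemma integrable_g_aux (α₂ t l : ℝ) (ha2 : 0 ≤ α₂) (ha2' : α₂ < 1) (ht : 0 < t) (hl : 0 < l) :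
    IntegrableOn (fun s : ℝ => (t - s) ^ (-α₂) * Real.exp (-l * (t - s)))
      (Set.Ioo 0 t) volume := by
  have hgm : Measurable fun s : ℝ => (t - s) ^ (-α₂) * Real.exp (-l * (t - s)) := by fun_prop
  have hgbase : IntegrableOn (fun s : ℝ => (t - s) ^ (-α₂)) (Set.Ioo 0 t) := by
    have h0 : IntervalIntegrable (fun x : ℝ => x ^ (-α₂)) volume 0 t :=
      intervalIntegral.intervalIntegrable_rpow' (by linarith)
    have h1 : IntervalIntegrable (fun s : ℝ => (t - s) ^ (-α₂)) volume (t - t) (t - 0) :=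
      (h0.comp_sub_left t).symm
    rw [sub_self, sub_zero] at h1
    rwa [intervalIntegrable_iff_integrableOn_Ioo_of_le ht.le] at h1
  refine hgbase.mono' hgm.aestronglyMeasurable ?_
  filter_upwards [ae_restrict_mem measurableSet_Ioo] with x hx
  rw [Real.norm_eq_abs,
    abs_of_nonneg (mul_nonneg (Real.rpow_nonneg (by linarith [hx.2]) _) (Real.exp_nonneg _))]
  calc (t - x) ^ (-α₂) * Real.exp (-l * (t - x))
      ≤ (t - x) ^ (-α₂) * 1 := by
        refine mul_le_mul_of_nonneg_left ?_ (Real.rpow_nonneg (by linarith [hx.2]) _)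
        exact Real.exp_le_one_iff.2 (by nlinarith [hx.2])
    _ = (t - x) ^ (-α₂) := mul_one _

lemma integrable_fg_aux (α₁ α₂ t l : ℝ) (ha1 : 0 ≤ α₁) (ha1' : α₁ < 1)
    (ha2 : 0 ≤ α₂) (ha2' : α₂ < 1) (ht : 0 < t) (hl : 0 < l) :
    IntegrableOn
      (fun s : ℝ => s ^ (-α₁) * ((t - s) ^ (-α₂) * Real.exp (-l * (t - s))))
      (Set.Ioo 0 t) volume := by
  have hm : Measurable fun s : ℝ =>
      s ^ (-α₁) * ((t - s) ^ (-α₂) * Real.exp (-l * (t - s))) := by fun_prop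
  have hsplit : Set.Ioo (0:ℝ) t = Set.Ioc 0 (t/2) ∪ Set.Ioo (t/2) t :=
    (Set.Ioc_union_Ioo_eq_Ioo (by linarith) (by linarith)).symm
  rw [hsplit]
  apply IntegrableOn.union
  · -- near 0 : dominate by s^(-α₁) * (t/2)^(-α₂)
    have hbase : IntegrableOn (fun x : ℝ => x ^ (-α₁) * (t/2) ^ (-α₂)) (Set.Ioc 0 (t/2)) :=
      (((intervalIntegral.integrableOn_Ioo_rpow_iff ht).2
          (show (-1:ℝ) < -α₁ by linarith)).mono_set
        (fun x hx => ⟨hx.1, lt_of_le_of_lt hx.2 (by linarith)⟩)).mul_const _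
    refine hbase.mono' hm.aestronglyMeasurable ?_
    filter_upwards [ae_restrict_mem measurableSet_Ioc] with x hx
    have hx1 : 0 < x := hx.1
    have hx2 : x ≤ t / 2 := hx.2
    have htx : t / 2 ≤ t - x := by linarith
    have hfx : (0:ℝ) ≤ x ^ (-α₁) := Real.rpow_nonneg hx1.le _
    have hgx : (0:ℝ) ≤ (t - x) ^ (-α₂) * Real.exp (-l * (t - x)) :=
      mul_nonneg (Real.rpow_nonneg (by linarith) _) (Real.exp_nonneg _)
    rw [Real.norm_eq_abs, abs_of_nonneg (mul_nonneg hfx hgx)]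
    refine mul_le_mul_of_nonneg_left ?_ hfx
    calc (t - x) ^ (-α₂) * Real.exp (-l * (t - x))
        ≤ (t - x) ^ (-α₂) * 1 :=
          mul_le_mul_of_nonneg_left
            (Real.exp_le_one_iff.2 (by nlinarith)) (Real.rpow_nonneg (by linarith) _)
      _ = (t - x) ^ (-α₂) := mul_one _
      _ ≤ (t/2) ^ (-α₂) :=
          Real.rpow_le_rpow_of_nonpos (by linarith) htx (neg_nonpos.2 ha2)
  · -- near t : dominate by (t/2)^(-α₁) * g
    have hbase : IntegrableOn
        (fun x : ℝ => (t/2) ^ (-α₁) * ((t - x) ^ (-α₂) * Real.exp (-l * (t - x))))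
        (Set.Ioo (t/2) t) :=
      ((integrable_g_aux α₂ t l ha2 ha2' ht hl).mono_set
        (fun x hx => ⟨by linarith [hx.1], hx.2⟩)).const_mul _
    refine hbase.mono' hm.aestronglyMeasurable ?_
    filter_upwards [ae_restrict_mem measurableSet_Ioo] with x hx
    have hx1 : t / 2 < x := hx.1
    have hfx : (0:ℝ) ≤ x ^ (-α₁) := Real.rpow_nonneg (by linarith) _
    have hgx : (0:ℝ) ≤ (t - x) ^ (-α₂) * Real.exp (-l * (t - x)) :=
      mul_nonneg (Real.rpow_nonneg (by linarith [hx.2]) _) (Real.exp_nonneg _)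
    rw [Real.norm_eq_abs, abs_of_nonneg (mul_nonneg hfx hgx)]
    exact mul_le_mul_of_nonneg_right
      (Real.rpow_le_rpow_of_nonpos (by linarith) hx1.le (neg_nonpos.2 ha1)) hgx

set_option maxHeartbeats 1000000 in
/-- FKG step: for `α₁, α₂ ∈ [0,1)` and `t, λ > 0`,
`∫₀ᵗ s^{-α₁}(t-s)^{-α₂} e^{-λ(t-s)} ds ≤ (1/(1-α₁)) t^{-α₁} ∫₀ᵗ s^{-α₂} e^{-λ s} ds`. -/
theorem stmt0 (α₁ α₂ t l : ℝ) (h1 : α₁ ∈ Set.Ico (0:ℝ) 1) (h2 : α₂ ∈ Set.Ico (0:ℝ) 1)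
    (ht : 0 < t) (hl : 0 < l) :
    ∫ s in Set.Ioc (0:ℝ) t, s ^ (-α₁) * ((t - s) ^ (-α₂) * Real.exp (-l * (t - s))) ≤
      (1 / (1 - α₁)) * t ^ (-α₁) * ∫ s in Set.Ioc (0:ℝ) t, s ^ (-α₂) * Real.exp (-l * s) := by
  obtain ⟨ha1, ha1'⟩ := h1
  obtain ⟨ha2, ha2'⟩ := h2
  haveI hfin : IsFiniteMeasure (volume.restrict (Set.Ioo (0:ℝ) t)) := by
    constructor
    rw [Measure.restrict_apply_univ, Real.volume_Ioo]
    exact ENNReal.ofReal_lt_top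
  -- monotonicity facts
  have hmono : ∀ x ∈ Set.Ioo (0:ℝ) t, ∀ y ∈ Set.Ioo (0:ℝ) t, x ≤ y →
      y ^ (-α₁) ≤ x ^ (-α₁) ∧
      (t - x) ^ (-α₂) * Real.exp (-l * (t - x)) ≤ (t - y) ^ (-α₂) * Real.exp (-l * (t - y)) := by
    intro x hx y hy hxy
    constructor
    · exact Real.rpow_le_rpow_of_nonpos hx.1 hxy (neg_nonpos.2 ha1)
    · have hy1 : (0:ℝ) < t - y := by linarith [hy.2]
      have hy2 : t - y ≤ t - x := by linarith
      exact mul_le_mul (Real.rpow_le_rpow_of_nonpos hy1 hy2 (neg_nonpos.2 ha2))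
        (Real.exp_le_exp.2 (by nlinarith)) (Real.exp_nonneg _)
        (Real.rpow_nonneg (by linarith) _)
  have hfg : ∀ᵐ z ∂((volume.restrict (Set.Ioo (0:ℝ) t)).prod
      (volume.restrict (Set.Ioo (0:ℝ) t))),
      ((fun s : ℝ => s ^ (-α₁)) z.1 - (fun s : ℝ => s ^ (-α₁)) z.2) *
        ((fun s : ℝ => (t - s) ^ (-α₂) * Real.exp (-l * (t - s))) z.1 -
          (fun s : ℝ => (t - s) ^ (-α₂) * Real.exp (-l * (t - s))) z.2) ≤ 0 := by
    have hprod : (volume.restrict (Set.Ioo (0:ℝ) t)).prod (volume.restrict (Set.Ioo (0:ℝ) t))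
        = ((volume : Measure ℝ).prod volume).restrict
            ((Set.Ioo (0:ℝ) t) ×ˢ (Set.Ioo (0:ℝ) t)) :=
      Measure.prod_restrict _ _
    rw [hprod]
    filter_upwards [ae_restrict_mem (measurableSet_Ioo.prod measurableSet_Ioo)] with z hz
    obtain ⟨hz1, hz2⟩ := hz
    rcases le_total z.1 z.2 with h | h
    · obtain ⟨hfy, hgy⟩ := hmono z.1 hz1 z.2 hz2 h
      exact mul_nonpos_of_nonneg_of_nonpos (by linarith) (by linarith)
    · obtain ⟨hfy, hgy⟩ := hmono z.2 hz2 z.1 hz1 h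
      exact mul_nonpos_of_nonpos_of_nonneg (by linarith) (by linarith)
  -- integrability
  have hfint : IntegrableOn (fun s : ℝ => s ^ (-α₁)) (Set.Ioo 0 t) volume :=
    (intervalIntegral.integrableOn_Ioo_rpow_iff ht).2 (by linarith)
  have hgint : IntegrableOn (fun s : ℝ => (t - s) ^ (-α₂) * Real.exp (-l * (t - s)))
      (Set.Ioo 0 t) volume := integrable_g_aux α₂ t l ha2 ha2' ht hl
  have hIfg : IntegrableOn
      (fun s : ℝ => s ^ (-α₁) * ((t - s) ^ (-α₂) * Real.exp (-l * (t - s))))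
      (Set.Ioo 0 t) volume := integrable_fg_aux α₁ α₂ t l ha1 ha1' ha2 ha2' ht hl
  -- apply FKG
  have key := fkg_aux (volume.restrict (Set.Ioo (0:ℝ) t))
    (fun s : ℝ => s ^ (-α₁))
    (fun s : ℝ => (t - s) ^ (-α₂) * Real.exp (-l * (t - s)))
    hfg hfint hgint hIfg
  -- compute the measure of the whole space
  have hμuniv : ((volume.restrict (Set.Ioo (0:ℝ) t)) Set.univ).toReal = t := by
    rw [Measure.restrict_apply_univ, Real.volume_Ioo, sub_zero, ENNReal.toReal_ofReal ht.le]
  -- compute ∫ f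
  have hA : (∫ x in Set.Ioo (0:ℝ) t, x ^ (-α₁)) = t ^ (1 - α₁) / (1 - α₁) := by
    have e : (∫ x in Set.Ioo (0:ℝ) t, x ^ (-α₁)) = ∫ x in (0:ℝ)..t, x ^ (-α₁) := by
      rw [intervalIntegral.integral_of_le ht.le, integral_Ioc_eq_integral_Ioo]
    rw [e, integral_rpow (Or.inl (by linarith))]
    rw [Real.zero_rpow (by intro h; linarith [h] : -α₁ + 1 ≠ 0)]
    ring_nf
  -- compute ∫ g
  have hB : (∫ x in Set.Ioo (0:ℝ) t, (t - x) ^ (-α₂) * Real.exp (-l * (t - x)))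
      = ∫ s in Set.Ioc (0:ℝ) t, s ^ (-α₂) * Real.exp (-l * s) := by
    have e1 : (∫ x in Set.Ioo (0:ℝ) t, (t - x) ^ (-α₂) * Real.exp (-l * (t - x)))
        = ∫ x in (0:ℝ)..t, (t - x) ^ (-α₂) * Real.exp (-l * (t - x)) := by
      rw [intervalIntegral.integral_of_le ht.le, integral_Ioc_eq_integral_Ioo]
    have e2 : (∫ x in (0:ℝ)..t, (fun s : ℝ => s ^ (-α₂) * Real.exp (-l * s)) (t - x))
        = ∫ x in (t - t)..(t - 0), (fun s : ℝ => s ^ (-α₂) * Real.exp (-l * s)) x :=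
      intervalIntegral.integral_comp_sub_left
        (a := 0) (b := t) (fun s : ℝ => s ^ (-α₂) * Real.exp (-l * s)) t
    rw [sub_self, sub_zero] at e2
    rw [e1]
    rw [show (∫ x in (0:ℝ)..t, (t - x) ^ (-α₂) * Real.exp (-l * (t - x)))
        = ∫ x in (0:ℝ)..t, (fun s : ℝ => s ^ (-α₂) * Real.exp (-l * s)) (t - x) from rfl,
      e2, intervalIntegral.integral_of_le ht.le]
  rw [hμuniv, hA, hB] at key
  rw [← integral_Ioc_eq_integral_Ioo] at key
  have htpow : t ^ (1 - α₁) = t ^ (-α₁) * t := by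
    rw [show (1 - α₁) = -α₁ + 1 by ring, Real.rpow_add ht, Real.rpow_one]
  rw [htpow] at key
  have h1a : (0:ℝ) < 1 - α₁ := by linarith
  rw [← mul_le_mul_iff_right₀ ht]
  calc t * ∫ s in Set.Ioc (0:ℝ) t, s ^ (-α₁) * ((t - s) ^ (-α₂) * Real.exp (-l * (t - s)))
      ≤ t ^ (-α₁) * t / (1 - α₁)
          * ∫ s in Set.Ioc (0:ℝ) t, s ^ (-α₂) * Real.exp (-l * s) := key
    _ = t * ((1 / (1 - α₁)) * t ^ (-α₁)
          * ∫ s in Set.Ioc (0:ℝ) t, s ^ (-α₂) * Real.exp (-l * s)) := by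
        field_simp
end

section
/- Let α₂ ∈ [0,1) and α ∈ [0, 1-α₂). Then there exists a constant c = α^α ((1-α)/(1-α-α₂))^{1-α} such that for all t, λ > 0, ∫₀ᵗ s^{-α₂} e^{-λ s} ds ≤ c · t^{1-α-α₂} · λ^{-α}. -/
open MeasureTheory

section
open MeasureTheory Set Real

lemma aux_rpow_int (r t : ℝ) (hr : -1 < r) (ht : 0 < t) :
    IntegrableOn (fun s : ℝ => s ^ r) (Set.Ioc 0 t) :=
  (intervalIntegrable_iff_integrableOn_Ioc_of_le ht.le).mp
    (intervalIntegral.intervalIntegrable_rpow' hr)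

lemma aux_rpow_val (r t : ℝ) (hr : -1 < r) (ht : 0 < t) :
    ∫ s in Set.Ioc (0:ℝ) t, s ^ r = t ^ (r + 1) / (r + 1) := by
  rw [← intervalIntegral.integral_of_le ht.le, integral_rpow (Or.inl hr),
    Real.zero_rpow (by linarith), sub_zero]

lemma aux_exp (c t : ℝ) (hc : 0 < c) (ht : 0 < t) :
    ∫ s in Set.Ioc (0:ℝ) t, Real.exp (-c * s) ≤ 1 / c := by
  have h1 : ∫ s in Set.Ioc (0:ℝ) t, Real.exp (-c * s) ≤
      ∫ s in Set.Ioi (0:ℝ), Real.exp (-c * s) := by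
    refine setIntegral_mono_set (exp_neg_integrableOn_Ioi 0 hc) ?_
      (HasSubset.Subset.eventuallyLE Set.Ioc_subset_Ioi_self)
    exact Filter.Eventually.of_forall fun x => (Real.exp_pos _).le
  have h2 : ∫ s in Set.Ioi (0:ℝ), Real.exp (-c * s) = 1 / c := by
    have := MeasureTheory.integral_comp_mul_left_Ioi (fun x => Real.exp (-x)) 0 hc
    simp only [mul_zero, integral_exp_neg_Ioi_zero, smul_eq_mul, mul_one] at this
    calc ∫ s in Set.Ioi (0:ℝ), Real.exp (-c * s)
        = ∫ s in Set.Ioi (0:ℝ), Real.exp (-(c * s)) := by simp [neg_mul]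
      _ = c⁻¹ := this
      _ = 1 / c := (one_div c).symm
  linarith
end

open Set Real in
/-- Hölder step: for `α₂ ∈ [0,1)`, `α ∈ [0, 1-α₂)` and `t, λ > 0`,
`∫₀ᵗ s^{-α₂} e^{-λ s} ds ≤ α^α ((1-α)/(1-α-α₂))^{1-α} t^{1-α-α₂} λ^{-α}`. -/
theorem stmt1 (α₂ α : ℝ) (h2 : α₂ ∈ Set.Ico (0:ℝ) 1) (hα : α ∈ Set.Ico (0:ℝ) (1 - α₂))
    (t l : ℝ) (ht : 0 < t) (hl : 0 < l) :
    ∫ s in Set.Ioc (0:ℝ) t, s ^ (-α₂) * Real.exp (-l * s) ≤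
      α ^ α * ((1 - α) / (1 - α - α₂)) ^ (1 - α) * (t ^ (1 - α - α₂) * l ^ (-α)) := by
  obtain ⟨h20, h21⟩ := h2
  obtain ⟨hα0, hα2⟩ := hα
  have hd : 0 < 1 - α - α₂ := by linarith
  have hα1 : α < 1 := by linarith
  have h1α : 0 < 1 - α := by linarith
  have hfm0 : AEStronglyMeasurable (fun s : ℝ => s ^ (-α₂))
      (volume.restrict (Set.Ioc (0:ℝ) t)) := (aux_rpow_int (-α₂) t (by linarith) ht).1
  have hgm0 : AEStronglyMeasurable (fun s : ℝ => Real.exp (-l * s))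
      (volume.restrict (Set.Ioc (0:ℝ) t)) :=
    (Real.continuous_exp.comp (continuous_const.mul continuous_id)).aestronglyMeasurable
  rcases eq_or_lt_of_le hα0 with h0 | h0
  · -- α = 0
    subst h0
    have hbound : ∫ s in Set.Ioc (0:ℝ) t, s ^ (-α₂) * Real.exp (-l * s) ≤
        ∫ s in Set.Ioc (0:ℝ) t, s ^ (-α₂) := by
      have hint : IntegrableOn (fun s : ℝ => s ^ (-α₂)) (Set.Ioc 0 t) :=
        aux_rpow_int _ _ (by linarith) ht
      refine setIntegral_mono_on ?_ hint measurableSet_Ioc fun s hs => ?_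
      · refine hint.mono' (hfm0.mul hgm0) ?_
        filter_upwards [ae_restrict_mem measurableSet_Ioc] with s hs
        rw [Real.norm_eq_abs, abs_mul, abs_of_nonneg (Real.rpow_nonneg hs.1.le _),
          Real.abs_exp]
        nth_rewrite 2 [← mul_one (s ^ (-α₂))]
        exact mul_le_mul_of_nonneg_left
          (Real.exp_le_one_iff.mpr (by nlinarith [hs.1])) (Real.rpow_nonneg hs.1.le _)
      · nth_rewrite 2 [← mul_one (s ^ (-α₂))]
        exact mul_le_mul_of_nonneg_left
          (Real.exp_le_one_iff.mpr (by nlinarith [hs.1])) (Real.rpow_nonneg hs.1.le _)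
    rw [aux_rpow_val _ _ (by linarith) ht] at hbound
    refine hbound.trans (le_of_eq ?_)
    rw [Real.rpow_zero, neg_zero, Real.rpow_zero, sub_zero, Real.rpow_one,
      show (-α₂ + 1 : ℝ) = 1 - α₂ by ring]
    field_simp
  · -- 0 < α
    set μ := volume.restrict (Set.Ioc (0:ℝ) t) with hμ
    have hpq : Real.HolderConjugate (1 / (1 - α)) (1 / α) := by
      rw [Real.holderConjugate_iff]
      constructor
      · rw [lt_div_iff₀ h1α]; linarith
      · rw [one_div, inv_inv, one_div, inv_inv]; ring
    set f : ℝ → ℝ := fun s => s ^ (-α₂) with hf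
    set g : ℝ → ℝ := fun s => Real.exp (-l * s) with hg
    have hf0 : 0 ≤ᵐ[μ] f := by
      filter_upwards [ae_restrict_mem measurableSet_Ioc] with s hs
      exact Real.rpow_nonneg hs.1.le _
    have hg0 : 0 ≤ᵐ[μ] g := Filter.Eventually.of_forall fun s => (Real.exp_pos _).le
    have hfm : AEStronglyMeasurable f μ := hfm0
    have hgm : AEStronglyMeasurable g μ := hgm0
    set P := ENNReal.ofReal (1 / (1 - α)) with hP
    have hP0 : P ≠ 0 := by
      simp only [hP, Ne, ENNReal.ofReal_eq_zero, not_le]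
      positivity
    have hPtop : P ≠ ⊤ := ENNReal.ofReal_ne_top
    have hPtr : P.toReal = 1 / (1 - α) := ENNReal.toReal_ofReal (by positivity)
    have hrr : (-1 : ℝ) < -(α₂ * (1 / (1 - α))) := by
      have h1 : α₂ * (1 / (1 - α)) < 1 := by
        rw [mul_one_div, div_lt_one h1α]; linarith
      linarith
    have hfP : MemLp f P μ := by
      refine (memLp_norm_rpow_iff (q := P) (p := P) hfm hP0 hPtop).mp ?_
      rw [ENNReal.div_self hP0 hPtop, memLp_one_iff_integrable]
      refine (aux_rpow_int (-(α₂ * (1 / (1 - α)))) t hrr ht).congr ?_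
      filter_upwards [ae_restrict_mem measurableSet_Ioc] with s hs
      rw [hPtr, Real.norm_eq_abs, abs_of_nonneg (Real.rpow_nonneg hs.1.le _),
        ← Real.rpow_mul hs.1.le]
      congr 1
      ring
    haveI : IsFiniteMeasure μ := ⟨by
      rw [hμ, Measure.restrict_apply_univ]; exact measure_Ioc_lt_top⟩
    have hgQ : MemLp g (ENNReal.ofReal (1 / α)) μ := by
      refine (memLp_top_of_bound hgm 1 ?_).mono_exponent le_top
      filter_upwards [ae_restrict_mem measurableSet_Ioc] with s hs
      rw [Real.norm_eq_abs, Real.abs_exp]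
      exact Real.exp_le_one_iff.mpr (by nlinarith [hs.1])
    have H := integral_mul_le_Lp_mul_Lq_of_nonneg hpq hf0 hg0 hfP hgQ
    rw [one_div_one_div, one_div_one_div] at H
    -- compute the first factor
    have hA : ∫ s, f s ^ (1 / (1 - α)) ∂μ =
        t ^ ((1 - α - α₂) / (1 - α)) * ((1 - α) / (1 - α - α₂)) := by
      have e1 : ∫ s, f s ^ (1 / (1 - α)) ∂μ
          = ∫ s in Set.Ioc (0:ℝ) t, s ^ (-(α₂ * (1 / (1 - α)))) := by
        refine setIntegral_congr_fun measurableSet_Ioc fun s hs => ?_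
        show (s ^ (-α₂) : ℝ) ^ (1 / (1 - α)) = _
        rw [← Real.rpow_mul hs.1.le]
        congr 1
        ring
      rw [e1, aux_rpow_val _ _ hrr ht,
        show -(α₂ * (1 / (1 - α))) + 1 = (1 - α - α₂) / (1 - α) by field_simp; ring,
        div_eq_mul_inv, inv_div]
    have hApow : (∫ s, f s ^ (1 / (1 - α)) ∂μ) ^ (1 - α)
        = t ^ (1 - α - α₂) * ((1 - α) / (1 - α - α₂)) ^ (1 - α) := by
      rw [hA, Real.mul_rpow (Real.rpow_nonneg ht.le _) (by positivity),
        ← Real.rpow_mul ht.le, div_mul_cancel₀ _ h1α.ne']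
    -- bound the second factor
    have hBnn : 0 ≤ ∫ s, g s ^ (1 / α) ∂μ :=
      integral_nonneg fun s => Real.rpow_nonneg (Real.exp_pos _).le _
    have hB : ∫ s, g s ^ (1 / α) ∂μ ≤ α / l := by
      have e2 : ∫ s, g s ^ (1 / α) ∂μ
          = ∫ s in Set.Ioc (0:ℝ) t, Real.exp (-(l / α) * s) := by
        refine setIntegral_congr_fun measurableSet_Ioc fun s hs => ?_
        show Real.exp (-l * s) ^ (1 / α) = _
        rw [← Real.exp_mul]
        congr 1
        ring
      rw [e2]
      have := aux_exp (l / α) t (by positivity) ht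
      rwa [one_div_div] at this
    have hBpow : (∫ s, g s ^ (1 / α) ∂μ) ^ α ≤ α ^ α * l ^ (-α) := by
      calc (∫ s, g s ^ (1 / α) ∂μ) ^ α ≤ (α / l) ^ α :=
            Real.rpow_le_rpow hBnn hB hα0
        _ = α ^ α * l ^ (-α) := by
            rw [Real.div_rpow h0.le hl.le, Real.rpow_neg hl.le, div_eq_mul_inv]
    have hfin : (∫ s, f s ^ (1 / (1 - α)) ∂μ) ^ (1 - α) *
        (∫ s, g s ^ (1 / α) ∂μ) ^ α
        ≤ α ^ α * ((1 - α) / (1 - α - α₂)) ^ (1 - α) * (t ^ (1 - α - α₂) * l ^ (-α)) := by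
      rw [hApow]
      calc t ^ (1 - α - α₂) * ((1 - α) / (1 - α - α₂)) ^ (1 - α) *
            (∫ s, g s ^ (1 / α) ∂μ) ^ α
          ≤ t ^ (1 - α - α₂) * ((1 - α) / (1 - α - α₂)) ^ (1 - α) * (α ^ α * l ^ (-α)) :=
            mul_le_mul_of_nonneg_left hBpow (by positivity)
        _ = α ^ α * ((1 - α) / (1 - α - α₂)) ^ (1 - α) * (t ^ (1 - α - α₂) * l ^ (-α)) := by
            ring
    exact H.trans hfin
end

section
/- Let α₁, α₂ ∈ [0,1) and α ∈ [0, 1-α₂]. Then there exists a constant c(α, α₁, α₂) ∈ (0,∞) such that for all t, λ > 0, ∫₀ᵗ s^{-α₁}(t-s)^{-α₂} e^{-λ(t-s)} ds ≤ c(α, α₁, α₂) · t^{1-α-α₁-α₂} · λ^{-α}. -/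
open MeasureTheory

lemma aux_rpow_exp_bound (a : ℝ) (ha : 0 ≤ a) :
    ∃ C : ℝ, 0 < C ∧ ∀ x : ℝ, 0 < x → x ^ a * Real.exp (-x) ≤ C := by
  refine ⟨(Nat.factorial (Nat.ceil a) : ℝ) + 1, by positivity, fun x hx => ?_⟩
  have hfac : (1:ℝ) ≤ (Nat.ceil a).factorial := by
    exact_mod_cast Nat.one_le_iff_ne_zero.2 (Nat.factorial_ne_zero (Nat.ceil a))
  rcases le_total x 1 with hx1 | hx1
  · have h1 : x ^ a ≤ 1 := Real.rpow_le_one hx.le hx1 ha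
    have h2 : Real.exp (-x) ≤ 1 := Real.exp_le_one_iff.2 (by linarith)
    nlinarith [Real.exp_pos (-x), Real.rpow_nonneg hx.le a]
  · set n := Nat.ceil a with hn
    have h1 : x ^ a ≤ x ^ (n : ℝ) :=
      Real.rpow_le_rpow_of_exponent_le hx1 (Nat.le_ceil a)
    have h2 : x ^ n / (n.factorial : ℝ) ≤ Real.exp x := Real.pow_div_factorial_le_exp x hx.le n
    have h3 : x ^ n * Real.exp (-x) ≤ (n.factorial : ℝ) := by
      rw [Real.exp_neg]
      rw [div_le_iff₀ (by positivity)] at h2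
      have hexp := Real.exp_pos x
      calc x ^ n * (Real.exp x)⁻¹ ≤ ((n.factorial : ℝ) * Real.exp x) * (Real.exp x)⁻¹ := by
            gcongr
            linarith
        _ = (n.factorial : ℝ) := by field_simp
    have h4 : x ^ (n:ℝ) = x ^ n := Real.rpow_natCast x n
    nlinarith [Real.exp_pos (-x)]

lemma aux_min_interp {A B θ : ℝ} (hA : 0 < A) (hB : 0 < B) (hθ0 : 0 ≤ θ) (hθ1 : θ ≤ 1) :
    min A B ≤ A ^ (1 - θ) * B ^ θ := by
  have hm : 0 < min A B := lt_min hA hB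
  calc min A B = (min A B) ^ (1 - θ) * (min A B) ^ θ := by
        rw [← Real.rpow_add hm, sub_add_cancel, Real.rpow_one]
    _ ≤ A ^ (1 - θ) * B ^ θ :=
        mul_le_mul (Real.rpow_le_rpow hm.le (min_le_left _ _) (by linarith))
          (Real.rpow_le_rpow hm.le (min_le_right _ _) hθ0)
          (Real.rpow_nonneg hm.le _) (Real.rpow_nonneg hA.le _)

set_option maxHeartbeats 1000000 in
/-- The key singular Gronwall-type inequality (3.1): for `α₁, α₂ ∈ [0,1)` and
`α ∈ [0, 1-α₂]`, there is `c = c(α,α₁,α₂) ∈ (0,∞)` such that for all `t, λ > 0`,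
`∫₀ᵗ s^{-α₁}(t-s)^{-α₂} e^{-λ(t-s)} ds ≤ c t^{1-α-α₁-α₂} λ^{-α}`. -/
theorem stmt3 (α₁ α₂ α : ℝ) (h1 : α₁ ∈ Set.Ico (0:ℝ) 1) (h2 : α₂ ∈ Set.Ico (0:ℝ) 1)
    (hα : α ∈ Set.Icc (0:ℝ) (1 - α₂)) :
    ∃ c : ℝ, 0 < c ∧ ∀ t l : ℝ, 0 < t → 0 < l →
      ∫ s in Set.Ioc (0:ℝ) t, s ^ (-α₁) * ((t - s) ^ (-α₂) * Real.exp (-l * (t - s))) ≤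
        c * (t ^ (1 - α - α₁ - α₂) * l ^ (-α)) := by
  obtain ⟨hα₁0, hα₁1⟩ := h1
  obtain ⟨hα₂0, hα₂1⟩ := h2
  obtain ⟨hα0, hα2⟩ := hα
  obtain ⟨C₁, hC₁pos, hC₁⟩ := aux_rpow_exp_bound α hα0
  have h1α₂ : (0:ℝ) < 1 - α₂ := by linarith
  have h1α₁ : (0:ℝ) < 1 - α₁ := by linarith
  set θ := α / (1 - α₂) with hθdef
  have hθ0 : 0 ≤ θ := div_nonneg hα0 h1α₂.le
  have hθ1 : θ ≤ 1 := (div_le_one h1α₂).2 hα2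
  have hθmul : (1 - α₂) * θ = α := by
    rw [hθdef]; field_simp
  set Γ := Real.Gamma (1 - α₂) with hΓdef
  have hΓpos : 0 < Γ := Real.Gamma_pos_of_pos h1α₂
  set CA : ℝ := (1/(1-α₂)) ^ (1-θ) * Γ ^ θ with hCAdef
  have hCA : 0 < CA := by positivity
  refine ⟨2 * (C₁ / (1 - α₁)) + 2 * CA, by positivity, fun t l ht hl => ?_⟩
  set p : ℝ := 1 - α - α₁ - α₂ with hpdef
  set h : ℝ := t / 2 with hhdef
  have hhpos : 0 < h := by positivity
  have hht : h ≤ t := by rw [hhdef]; linarith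
  have hth : t - h = h := by rw [hhdef]; ring
  set f : ℝ → ℝ := fun s => s ^ (-α₁) * ((t - s) ^ (-α₂) * Real.exp (-l * (t - s))) with hfdef
  set G : ℝ → ℝ := fun u => u ^ (-α₂) * Real.exp (-l * u) with hGdef
  -- measurability
  have hfm : Measurable f := by fun_prop
  have hGm : Measurable G := by fun_prop
  -- nonnegativity
  have hfnn : ∀ s, 0 < s → s ≤ t → 0 ≤ f s := fun s hs0 hst => by
    have h1 : (0:ℝ) ≤ t - s := by linarith
    unfold f
    have := Real.rpow_nonneg hs0.le (-α₁)
    have := Real.rpow_nonneg h1 (-α₂)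
    positivity
  have hGnn : ∀ u, 0 ≤ u → 0 ≤ G u := fun u hu => by
    unfold G
    have := Real.rpow_nonneg hu (-α₂)
    positivity
  -- integrability of G on Ioi 0
  have Ibig : IntegrableOn G (Set.Ioi (0:ℝ)) := by
    have h0 := integrableOn_rpow_mul_exp_neg_mul_rpow
      (s := -α₂) (p := 1) (b := l) (by linarith) one_pos hl
    refine (IntegrableOn.congr_fun h0 (fun x hx => ?_) measurableSet_Ioi)
    simp only [hGdef, Real.rpow_one]
  -- integrability of G on Ioc 0 h
  have IG0h : IntegrableOn G (Set.Ioc (0:ℝ) h) :=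
    Ibig.mono_set Set.Ioc_subset_Ioi_self
  -- interval integrability of rpow
  have Irpow1 : IntegrableOn (fun s : ℝ => s ^ (-α₁)) (Set.Ioc (0:ℝ) h) := by
    rw [← intervalIntegrable_iff_integrableOn_Ioc_of_le hhpos.le]
    exact intervalIntegral.intervalIntegrable_rpow' (by linarith)
  -- integrability of G ∘ (t - ·) on Ioc h t
  have IGsub : IntegrableOn (fun s : ℝ => G (t - s)) (Set.Ioc h t) := by
    rw [← intervalIntegrable_iff_integrableOn_Ioc_of_le hht]
    have h0 : IntervalIntegrable G volume 0 h :=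
      (intervalIntegrable_iff_integrableOn_Ioc_of_le hhpos.le).2 IG0h
    have h1 := h0.comp_sub_left t
    rw [sub_zero, hth] at h1
    exact h1.symm
  -- integrability of f on Ioc 0 h
  have hint1 : IntegrableOn f (Set.Ioc (0:ℝ) h) := by
    refine Integrable.mono' (Irpow1.const_mul (h ^ (-α₂)))
      hfm.aestronglyMeasurable.restrict ?_
    filter_upwards [ae_restrict_mem measurableSet_Ioc] with s hs
    rw [Real.norm_eq_abs, abs_of_nonneg (hfnn s hs.1 (hs.2.trans hht))]
    have hts : h ≤ t - s := by
      have := hs.2; rw [hhdef] at *; linarith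
    have e1 : (t - s) ^ (-α₂) ≤ h ^ (-α₂) :=
      Real.rpow_le_rpow_of_nonpos hhpos hts (by linarith)
    have e2 : Real.exp (-l * (t - s)) ≤ 1 := by
      rw [Real.exp_le_one_iff]; nlinarith
    have e3 : (0:ℝ) ≤ s ^ (-α₁) := Real.rpow_nonneg hs.1.le _
    calc s ^ (-α₁) * ((t - s) ^ (-α₂) * Real.exp (-l * (t - s)))
        ≤ s ^ (-α₁) * (h ^ (-α₂) * 1) := by
          apply mul_le_mul_of_nonneg_left _ e3
          exact mul_le_mul e1 e2 (Real.exp_pos _).le (Real.rpow_nonneg hhpos.le _)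
      _ = h ^ (-α₂) * s ^ (-α₁) := by ring
  -- integrability of f on Ioc h t
  have hint2 : IntegrableOn f (Set.Ioc h t) := by
    refine Integrable.mono' (IGsub.const_mul (h ^ (-α₁)))
      hfm.aestronglyMeasurable.restrict ?_
    filter_upwards [ae_restrict_mem measurableSet_Ioc] with s hs
    rw [Real.norm_eq_abs, abs_of_nonneg (hfnn s (hhpos.trans hs.1) hs.2)]
    have e1 : s ^ (-α₁) ≤ h ^ (-α₁) :=
      Real.rpow_le_rpow_of_nonpos hhpos hs.1.le (by linarith)
    exact mul_le_mul_of_nonneg_right e1 (hGnn (t - s) (by linarith [hs.2]))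
  -- split
  have hsplit : ∫ s in Set.Ioc (0:ℝ) t, f s
      = (∫ s in Set.Ioc (0:ℝ) h, f s) + ∫ s in Set.Ioc h t, f s := by
    rw [← setIntegral_union (Set.Ioc_disjoint_Ioc_of_le le_rfl) measurableSet_Ioc hint1 hint2,
      Set.Ioc_union_Ioc_eq_Ioc hhpos.le hht]
  -- value of rpow integral
  have hval1 : ∫ s in Set.Ioc (0:ℝ) h, s ^ (-α₁) = h ^ (1 - α₁) / (1 - α₁) := by
    rw [← intervalIntegral.integral_of_le hhpos.le,
      integral_rpow (Or.inl (by linarith : (-1:ℝ) < -α₁)),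
      Real.zero_rpow (by linarith), show (-α₁ + 1 : ℝ) = 1 - α₁ by ring, sub_zero]
  -- h ^ p ≤ 2 * t ^ p
  have hhp : h ^ p ≤ 2 * t ^ p := by
    have e1 : h ^ p = t ^ p * ((2:ℝ) ^ p)⁻¹ := by
      rw [hhdef, Real.div_rpow ht.le (by norm_num), div_eq_mul_inv]
    have e2 : ((2:ℝ) ^ p)⁻¹ = (2:ℝ) ^ (-p) := (Real.rpow_neg (by norm_num) p).symm
    have e3 : (2:ℝ) ^ (-p) ≤ (2:ℝ) ^ (1:ℝ) :=
      Real.rpow_le_rpow_of_exponent_le one_le_two (by rw [hpdef]; linarith)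
    rw [e1, e2]
    have e4 : (0:ℝ) ≤ t ^ p := Real.rpow_nonneg ht.le p
    rw [Real.rpow_one] at e3
    nlinarith
  -- exponential bound
  have hexpb : Real.exp (-(l * h)) ≤ C₁ * (l * h) ^ (-α) := by
    have h0 := hC₁ (l * h) (by positivity)
    have hpos : 0 < (l * h) ^ α := Real.rpow_pos_of_pos (by positivity) _
    have h5 : Real.exp (-(l * h)) ≤ C₁ / (l * h) ^ α := by
      rw [le_div_iff₀ hpos, mul_comm]; exact h0
    rwa [div_eq_mul_inv, ← Real.rpow_neg (by positivity)] at h5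
  -- Piece 1
  have hP1 : ∫ s in Set.Ioc (0:ℝ) h, f s ≤ (C₁ / (1 - α₁)) * (h ^ p * l ^ (-α)) := by
    have step1 : ∫ s in Set.Ioc (0:ℝ) h, f s
        ≤ ∫ s in Set.Ioc (0:ℝ) h, (h ^ (-α₂) * Real.exp (-(l * h))) * s ^ (-α₁) := by
      refine setIntegral_mono_on hint1 (Irpow1.const_mul _) measurableSet_Ioc ?_
      intro s hs
      have hts : h ≤ t - s := by
        have := hs.2; rw [hhdef] at *; linarith
      have e1 : (t - s) ^ (-α₂) ≤ h ^ (-α₂) :=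
        Real.rpow_le_rpow_of_nonpos hhpos hts (by linarith)
      have e2 : Real.exp (-l * (t - s)) ≤ Real.exp (-(l * h)) := by
        apply Real.exp_le_exp.2; nlinarith
      have e3 : (0:ℝ) ≤ s ^ (-α₁) := Real.rpow_nonneg hs.1.le _
      calc s ^ (-α₁) * ((t - s) ^ (-α₂) * Real.exp (-l * (t - s)))
          ≤ s ^ (-α₁) * (h ^ (-α₂) * Real.exp (-(l * h))) := by
            apply mul_le_mul_of_nonneg_left _ e3
            exact mul_le_mul e1 e2 (Real.exp_pos _).le (Real.rpow_nonneg hhpos.le _)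
        _ = (h ^ (-α₂) * Real.exp (-(l * h))) * s ^ (-α₁) := by ring
    have step2 : ∫ s in Set.Ioc (0:ℝ) h, (h ^ (-α₂) * Real.exp (-(l * h))) * s ^ (-α₁)
        = (h ^ (-α₂) * Real.exp (-(l * h))) * (h ^ (1 - α₁) / (1 - α₁)) := by
      rw [MeasureTheory.integral_const_mul, hval1]
    have step3 : (h ^ (-α₂) * Real.exp (-(l * h))) * (h ^ (1 - α₁) / (1 - α₁))
        ≤ (C₁ / (1 - α₁)) * (h ^ p * l ^ (-α)) := by
      have e5 : (0:ℝ) ≤ h ^ (-α₂) := Real.rpow_nonneg hhpos.le _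
      have e6 : (0:ℝ) ≤ h ^ (1 - α₁) / (1 - α₁) := by positivity
      calc (h ^ (-α₂) * Real.exp (-(l * h))) * (h ^ (1 - α₁) / (1 - α₁))
          ≤ (h ^ (-α₂) * (C₁ * (l * h) ^ (-α))) * (h ^ (1 - α₁) / (1 - α₁)) := by
            apply mul_le_mul_of_nonneg_right _ e6
            exact mul_le_mul_of_nonneg_left hexpb e5
        _ = (C₁ / (1 - α₁)) * ((h ^ (-α₂) * h ^ (-α) * h ^ (1 - α₁)) * l ^ (-α)) := by
            rw [Real.mul_rpow hl.le hhpos.le]; ring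
        _ = (C₁ / (1 - α₁)) * (h ^ p * l ^ (-α)) := by
            rw [← Real.rpow_add hhpos, ← Real.rpow_add hhpos,
              show (-α₂ + -α + (1 - α₁) : ℝ) = p by rw [hpdef]; ring]
    exact step1.trans (step2.le.trans step3)
  -- change of variables for piece 2
  have hchg : ∫ s in Set.Ioc h t, G (t - s) = ∫ u in Set.Ioc (0:ℝ) h, G u := by
    rw [← intervalIntegral.integral_of_le hht, ← intervalIntegral.integral_of_le hhpos.le,
      intervalIntegral.integral_comp_sub_left G t, sub_self, hth]
  set J := ∫ u in Set.Ioc (0:ℝ) h, G u with hJdef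
  have hP2a : ∫ s in Set.Ioc h t, f s ≤ h ^ (-α₁) * J := by
    calc ∫ s in Set.Ioc h t, f s ≤ ∫ s in Set.Ioc h t, h ^ (-α₁) * G (t - s) := by
          refine setIntegral_mono_on hint2 (IGsub.const_mul _) measurableSet_Ioc ?_
          intro s hs
          exact mul_le_mul_of_nonneg_right
            (Real.rpow_le_rpow_of_nonpos hhpos hs.1.le (by linarith))
            (hGnn (t - s) (by linarith [hs.2]))
      _ = h ^ (-α₁) * ∫ s in Set.Ioc h t, G (t - s) := MeasureTheory.integral_const_mul _ _
      _ = h ^ (-α₁) * J := by rw [hchg]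
  have hJA : J ≤ h ^ (1 - α₂) / (1 - α₂) := by
    have hIr : IntegrableOn (fun u : ℝ => u ^ (-α₂)) (Set.Ioc (0:ℝ) h) := by
      rw [← intervalIntegrable_iff_integrableOn_Ioc_of_le hhpos.le]
      exact intervalIntegral.intervalIntegrable_rpow' (by linarith)
    have step : J ≤ ∫ u in Set.Ioc (0:ℝ) h, u ^ (-α₂) := by
      refine setIntegral_mono_on IG0h hIr measurableSet_Ioc ?_
      intro u hu
      have e1 : Real.exp (-l * u) ≤ 1 := by
        rw [Real.exp_le_one_iff]; nlinarith [hu.1]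
      have e2 : (0:ℝ) ≤ u ^ (-α₂) := Real.rpow_nonneg hu.1.le _
      calc u ^ (-α₂) * Real.exp (-l * u) ≤ u ^ (-α₂) * 1 :=
            mul_le_mul_of_nonneg_left e1 e2
        _ = u ^ (-α₂) := mul_one _
    have hval2 : ∫ u in Set.Ioc (0:ℝ) h, u ^ (-α₂) = h ^ (1 - α₂) / (1 - α₂) := by
      rw [← intervalIntegral.integral_of_le hhpos.le,
        integral_rpow (Or.inl (by linarith : (-1:ℝ) < -α₂)),
        Real.zero_rpow (by linarith), show (-α₂ + 1 : ℝ) = 1 - α₂ by ring, sub_zero]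
    exact step.trans_eq hval2
  have hJB : J ≤ Γ * l ^ (α₂ - 1) := by
    have step : J ≤ ∫ u in Set.Ioi (0:ℝ), G u := by
      refine setIntegral_mono_set Ibig ?_ (HasSubset.Subset.eventuallyLE Set.Ioc_subset_Ioi_self)
      filter_upwards [ae_restrict_mem measurableSet_Ioi] with u hu
      exact hGnn u (le_of_lt hu)
    have hval3 : ∫ u in Set.Ioi (0:ℝ), G u = (1 / l) ^ (1 - α₂) * Γ := by
      rw [hΓdef, ← Real.integral_rpow_mul_exp_neg_mul_Ioi h1α₂ hl]
      refine setIntegral_congr_fun measurableSet_Ioi fun u hu => ?_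
      show u ^ (-α₂) * Real.exp (-l * u) = _
      rw [show (1 - α₂ - 1 : ℝ) = -α₂ by ring, neg_mul]
    have hval4 : (1 / l) ^ (1 - α₂) * Γ = Γ * l ^ (α₂ - 1) := by
      rw [one_div, ← Real.rpow_neg_one l, ← Real.rpow_mul hl.le,
        show (-1 * (1 - α₂) : ℝ) = α₂ - 1 by ring, mul_comm]
    exact step.trans_eq (hval3.trans hval4)
  have hJmin : J ≤ CA * (h ^ (1 - α₂ - α) * l ^ (-α)) := by
    have hA : 0 < h ^ (1 - α₂) / (1 - α₂) := by positivity
    have hB : 0 < Γ * l ^ (α₂ - 1) := by positivity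
    have h3 := aux_min_interp hA hB hθ0 hθ1
    have h4 : J ≤ min (h ^ (1 - α₂) / (1 - α₂)) (Γ * l ^ (α₂ - 1)) := le_min hJA hJB
    refine h4.trans (h3.trans_eq ?_)
    rw [div_eq_mul_one_div,
      Real.mul_rpow (Real.rpow_nonneg hhpos.le _) (by positivity),
      Real.mul_rpow hΓpos.le (Real.rpow_nonneg hl.le _),
      ← Real.rpow_mul hhpos.le, ← Real.rpow_mul hl.le,
      show ((1 - α₂) * (1 - θ) : ℝ) = 1 - α₂ - α by linarith [hθmul],
      show ((α₂ - 1) * θ : ℝ) = -α by linarith [hθmul], hCAdef]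
    ring
  have hP2 : ∫ s in Set.Ioc h t, f s ≤ CA * (h ^ p * l ^ (-α)) := by
    refine hP2a.trans ?_
    have hJnn : 0 ≤ h ^ (-α₁) := Real.rpow_nonneg hhpos.le _
    calc h ^ (-α₁) * J ≤ h ^ (-α₁) * (CA * (h ^ (1 - α₂ - α) * l ^ (-α))) :=
          mul_le_mul_of_nonneg_left hJmin hJnn
      _ = CA * ((h ^ (-α₁) * h ^ (1 - α₂ - α)) * l ^ (-α)) := by ring
      _ = CA * (h ^ p * l ^ (-α)) := by
          rw [← Real.rpow_add hhpos, show (-α₁ + (1 - α₂ - α) : ℝ) = p by rw [hpdef]; ring]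
  -- conclusion
  have hlnn : (0:ℝ) ≤ l ^ (-α) := Real.rpow_nonneg hl.le _
  have htp : (0:ℝ) ≤ t ^ p := Real.rpow_nonneg ht.le p
  calc ∫ s in Set.Ioc (0:ℝ) t, f s
      = (∫ s in Set.Ioc (0:ℝ) h, f s) + ∫ s in Set.Ioc h t, f s := hsplit
    _ ≤ (C₁ / (1 - α₁)) * (h ^ p * l ^ (-α)) + CA * (h ^ p * l ^ (-α)) :=
        add_le_add hP1 hP2
    _ ≤ (C₁ / (1 - α₁)) * ((2 * t ^ p) * l ^ (-α)) + CA * ((2 * t ^ p) * l ^ (-α)) := by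
        have hc1 : (0:ℝ) ≤ C₁ / (1 - α₁) := by positivity
        apply add_le_add
        · exact mul_le_mul_of_nonneg_left (mul_le_mul_of_nonneg_right hhp hlnn) hc1
        · exact mul_le_mul_of_nonneg_left (mul_le_mul_of_nonneg_right hhp hlnn) hCA.le
    _ = (2 * (C₁ / (1 - α₁)) + 2 * CA) * (t ^ p * l ^ (-α)) := by ring
end

section
/- Let δ ∈ [0,∞), k ∈ [1,∞]. The set 𝒫_{δ,k*} of probability measures μ on ℝᵈ with ‖μ‖_{δ,k*} := sup{|μ(f)| : f bounded measurable, ‖f‖_{W̃^{-δ,k}} ≤ 1} < ∞ is a complete metric space under the distance (μ,ν) ↦ ‖μ-ν‖_{δ,k*}. -/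
open MeasureTheory ENNReal

noncomputable def tildeNorm (d : ℕ) (k : ℝ≥0∞) {F : Type*} [NormedAddCommGroup F]
    (f : EuclideanSpace ℝ (Fin d) → F) : ℝ≥0∞ :=
  ⨆ z : EuclideanSpace ℝ (Fin d),
    eLpNorm ((Metric.closedBall z 1).indicator f) k volume

/-- The heat semigroup `P_t⁰ f(x) = (2πt)^{-d/2} ∫ e^{-|x-y|²/(2t)} f(y) dy` on `ℝᵈ`. -/
noncomputable def heatSem (d : ℕ) {F : Type*} [NormedAddCommGroup F] [NormedSpace ℝ F]
    (t : ℝ) (f : EuclideanSpace ℝ (Fin d) → F) (x : EuclideanSpace ℝ (Fin d)) : F :=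
  (2 * Real.pi * t) ^ (-(d : ℝ) / 2) •
    ∫ y, Real.exp (-‖x - y‖ ^ 2 / (2 * t)) • f y

/-- `(1-Δ)^{-δ/2}` via the subordination formula (identity for `δ = 0`). -/
noncomputable def bessel (d : ℕ) {F : Type*} [NormedAddCommGroup F] [NormedSpace ℝ F]
    (δ : ℝ) (f : EuclideanSpace ℝ (Fin d) → F) : EuclideanSpace ℝ (Fin d) → F :=
  if δ = 0 then f else fun x =>
    (Real.Gamma (δ / 2))⁻¹ •
      ∫ t in Set.Ioi (0:ℝ), (t ^ (δ / 2 - 1) * Real.exp (-t)) • heatSem d t f x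

/-- The local negative Sobolev norm `‖f‖_{W̃^{-δ,k}}`. -/
noncomputable def tildeSobNorm (d : ℕ) (δ : ℝ) (k : ℝ≥0∞) {F : Type*}
    [NormedAddCommGroup F] [NormedSpace ℝ F]
    (f : EuclideanSpace ℝ (Fin d) → F) : ℝ≥0∞ :=
  tildeNorm d k (bessel d δ f)

/-- `‖μ‖_{δ,k*}`, the dual norm of a measure against the `W̃^{-δ,k}` unit ball of
bounded measurable functions. -/
noncomputable def dualNorm (d : ℕ) (δ : ℝ) (k : ℝ≥0∞)
    (μ : Measure (EuclideanSpace ℝ (Fin d))) : ℝ≥0∞ :=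
  ⨆ (f : EuclideanSpace ℝ (Fin d) → ℝ) (_ : Measurable f) (_ : ∃ M, ∀ x, |f x| ≤ M)
    (_ : tildeSobNorm d δ k f ≤ 1), ENNReal.ofReal |∫ x, f x ∂μ|

/-- `‖μ-ν‖_{δ,k*}`. -/
noncomputable def dualDist (d : ℕ) (δ : ℝ) (k : ℝ≥0∞)
    (μ ν : Measure (EuclideanSpace ℝ (Fin d))) : ℝ≥0∞ :=
  ⨆ (f : EuclideanSpace ℝ (Fin d) → ℝ) (_ : Measurable f) (_ : ∃ M, ∀ x, |f x| ≤ M)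
    (_ : tildeSobNorm d δ k f ≤ 1), ENNReal.ofReal |∫ x, f x ∂μ - ∫ x, f x ∂ν|

/-! ### Auxiliary lemmas -/

lemma gauss_integrable (d : ℕ) {b : ℝ} (hb : 0 < b) :
    Integrable (fun v : EuclideanSpace ℝ (Fin d) => Real.exp (-b * ‖v‖ ^ 2)) := by
  have h := (GaussianFourier.integrable_cexp_neg_mul_sq_norm_add
    (b := (b : ℂ)) (by simpa using hb) 0 (0 : EuclideanSpace ℝ (Fin d))).norm
  refine h.congr (Filter.Eventually.of_forall fun v => ?_)
  have hz : (-(b:ℂ) * (‖v‖ : ℂ) ^ 2 + 0 * ((inner ℝ (0 : EuclideanSpace ℝ (Fin d)) v : ℝ) : ℂ))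
      = ((-b * ‖v‖ ^ 2 : ℝ) : ℂ) := by push_cast; ring
  show ‖Complex.exp _‖ = _
  rw [hz, ← Complex.ofReal_exp, Complex.norm_real, Real.norm_eq_abs,
    abs_of_pos (Real.exp_pos _)]

lemma gauss_integral (d : ℕ) {b : ℝ} (hb : 0 < b) :
    ∫ v : EuclideanSpace ℝ (Fin d), Real.exp (-b * ‖v‖ ^ 2) = (Real.pi / b) ^ ((d : ℝ) / 2) := by
  rw [GaussianFourier.integral_rexp_neg_mul_sq_norm hb]
  norm_num [finrank_euclideanSpace_fin]

lemma heatSem_bound (d : ℕ) {t M : ℝ} (ht : 0 < t) (hM : 0 ≤ M)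
    {f : EuclideanSpace ℝ (Fin d) → ℝ} (hf : ∀ x, |f x| ≤ M)
    (x : EuclideanSpace ℝ (Fin d)) : |heatSem d t f x| ≤ M := by
  have hb : 0 < (2 * t)⁻¹ := by positivity
  have h2πt : 0 < 2 * Real.pi * t := by positivity
  have hker : ∀ y : EuclideanSpace ℝ (Fin d),
      Real.exp (-‖x - y‖ ^ 2 / (2 * t)) = Real.exp (-(2 * t)⁻¹ * ‖x - y‖ ^ 2) := by
    intro y; congr 1; field_simp
  have hint : Integrable (fun y : EuclideanSpace ℝ (Fin d) =>
      Real.exp (-(2 * t)⁻¹ * ‖x - y‖ ^ 2) * M) := by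
    apply Integrable.mul_const
    exact ((Measure.measurePreserving_sub_left
        (volume : Measure (EuclideanSpace ℝ (Fin d))) x).integrable_comp
        (gauss_integrable d hb).aestronglyMeasurable).mpr (gauss_integrable d hb)
  have hval : ∫ y : EuclideanSpace ℝ (Fin d), Real.exp (-(2 * t)⁻¹ * ‖x - y‖ ^ 2) * M
      = (2 * Real.pi * t) ^ ((d : ℝ) / 2) * M := by
    rw [integral_mul_const]
    congr 1
    rw [integral_sub_left_eq_self
      (fun v : EuclideanSpace ℝ (Fin d) => Real.exp (-(2 * t)⁻¹ * ‖v‖ ^ 2)) volume x,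
      gauss_integral d hb]
    congr 1
    field_simp
  have hle : ‖∫ y, Real.exp (-‖x - y‖ ^ 2 / (2 * t)) • f y‖
      ≤ (2 * Real.pi * t) ^ ((d : ℝ) / 2) * M := by
    rw [← hval]
    refine norm_integral_le_of_norm_le hint (Filter.Eventually.of_forall fun y => ?_)
    rw [hker y, norm_smul, Real.norm_eq_abs, Real.norm_eq_abs,
      abs_of_pos (Real.exp_pos _)]
    exact mul_le_mul_of_nonneg_left (hf y) (Real.exp_pos _).le
  have heq : |heatSem d t f x| = (2 * Real.pi * t) ^ (-(d : ℝ) / 2) *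
      ‖∫ y, Real.exp (-‖x - y‖ ^ 2 / (2 * t)) • f y‖ := by
    rw [heatSem, ← Real.norm_eq_abs, norm_smul, Real.norm_eq_abs,
      abs_of_pos (Real.rpow_pos_of_pos h2πt _)]
  rw [heq]
  calc (2 * Real.pi * t) ^ (-(d : ℝ) / 2) * ‖∫ y, Real.exp (-‖x - y‖ ^ 2 / (2 * t)) • f y‖
      ≤ (2 * Real.pi * t) ^ (-(d : ℝ) / 2) * ((2 * Real.pi * t) ^ ((d : ℝ) / 2) * M) :=
        mul_le_mul_of_nonneg_left hle (Real.rpow_pos_of_pos h2πt _).le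
    _ = M := by
        rw [← mul_assoc, ← Real.rpow_add h2πt, neg_div, neg_add_cancel, Real.rpow_zero, one_mul]

lemma bessel_bound (d : ℕ) {δ M : ℝ} (hδ : 0 ≤ δ) (hM : 0 ≤ M)
    {f : EuclideanSpace ℝ (Fin d) → ℝ} (hf : ∀ x, |f x| ≤ M)
    (x : EuclideanSpace ℝ (Fin d)) : |bessel d δ f x| ≤ M := by
  rcases eq_or_lt_of_le hδ with h0 | hpos
  · rw [bessel, if_pos h0.symm]; exact hf x
  · have hδ2 : 0 < δ / 2 := by positivity
    have hΓ : 0 < Real.Gamma (δ / 2) := Real.Gamma_pos_of_pos hδ2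
    rw [bessel, if_neg (ne_of_gt hpos)]
    have hbint : IntegrableOn (fun t : ℝ => Real.exp (-t) * t ^ (δ / 2 - 1) * M)
        (Set.Ioi (0:ℝ)) := (Real.GammaIntegral_convergent hδ2).mul_const M
    have hle : ‖∫ t in Set.Ioi (0:ℝ), (t ^ (δ / 2 - 1) * Real.exp (-t)) • heatSem d t f x‖
        ≤ ∫ t in Set.Ioi (0:ℝ), Real.exp (-t) * t ^ (δ / 2 - 1) * M := by
      refine norm_integral_le_of_norm_le hbint ?_
      rw [MeasureTheory.ae_restrict_iff' measurableSet_Ioi]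
      refine Filter.Eventually.of_forall fun t ht => ?_
      have ht' : (0:ℝ) < t := ht
      rw [norm_smul, Real.norm_eq_abs, Real.norm_eq_abs,
        abs_of_nonneg (mul_nonneg (Real.rpow_nonneg ht'.le _) (Real.exp_pos _).le)]
      calc t ^ (δ / 2 - 1) * Real.exp (-t) * |heatSem d t f x|
          ≤ t ^ (δ / 2 - 1) * Real.exp (-t) * M :=
            mul_le_mul_of_nonneg_left (heatSem_bound d ht' hM hf x)
              (mul_nonneg (Real.rpow_nonneg ht'.le _) (Real.exp_pos _).le)
        _ = Real.exp (-t) * t ^ (δ / 2 - 1) * M := by ring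
    have hval : ∫ t in Set.Ioi (0:ℝ), Real.exp (-t) * t ^ (δ / 2 - 1) * M
        = Real.Gamma (δ / 2) * M := by
      rw [integral_mul_const, ← Real.Gamma_eq_integral hδ2]
    rw [smul_eq_mul, abs_mul, abs_of_pos (inv_pos.mpr hΓ), ← Real.norm_eq_abs]
    calc (Real.Gamma (δ / 2))⁻¹ * ‖∫ t in Set.Ioi (0:ℝ),
          (t ^ (δ / 2 - 1) * Real.exp (-t)) • heatSem d t f x‖
        ≤ (Real.Gamma (δ / 2))⁻¹ * (Real.Gamma (δ / 2) * M) := by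
          rw [← hval] at *; exact mul_le_mul_of_nonneg_left hle (inv_pos.mpr hΓ).le
      _ = M := by field_simp

lemma sob_bound (d : ℕ) (δ : ℝ) (k : ℝ≥0∞) {M : ℝ} (hδ : 0 ≤ δ) (hM : 0 ≤ M)
    {f : EuclideanSpace ℝ (Fin d) → ℝ} (hf : ∀ x, |f x| ≤ M) :
    tildeSobNorm d δ k f ≤
      volume (Metric.closedBall (0 : EuclideanSpace ℝ (Fin d)) 1) ^ k.toReal⁻¹
        * ENNReal.ofReal M := by
  refine iSup_le fun z => ?_
  rw [eLpNorm_indicator_eq_eLpNorm_restrict measurableSet_closedBall]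
  refine le_trans (eLpNorm_le_of_ae_bound (C := M)
    (Filter.Eventually.of_forall fun x => by
      rw [Real.norm_eq_abs]; exact bessel_bound d hδ hM hf x)) ?_
  rw [Measure.restrict_apply_univ, Measure.addHaar_closedBall_center]

/-- The normalizing constant. -/
noncomputable def dC (d : ℕ) (k : ℝ≥0∞) : ℝ :=
  (volume (Metric.closedBall (0 : EuclideanSpace ℝ (Fin d)) 1) ^ k.toReal⁻¹).toReal + 1

lemma dC_pos (d : ℕ) (k : ℝ≥0∞) : 0 < dC d k := by
  have := ENNReal.toReal_nonneg
    (a := volume (Metric.closedBall (0 : EuclideanSpace ℝ (Fin d)) 1) ^ k.toReal⁻¹)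
  unfold dC; linarith

lemma sob_le_one (d : ℕ) (δ : ℝ) (k : ℝ≥0∞) (hδ : 0 ≤ δ)
    {f : EuclideanSpace ℝ (Fin d) → ℝ} (hf : ∀ x, |f x| ≤ (dC d k)⁻¹) :
    tildeSobNorm d δ k f ≤ 1 := by
  have hCpos := dC_pos d k
  set B := volume (Metric.closedBall (0 : EuclideanSpace ℝ (Fin d)) 1) ^ k.toReal⁻¹ with hB
  have hBne : B ≠ ⊤ := by
    refine (ENNReal.rpow_lt_top_of_nonneg (by positivity) ?_).ne
    exact measure_closedBall_lt_top.ne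
  refine le_trans (sob_bound d δ k hδ (by positivity) hf) ?_
  rw [← hB]
  rw [← ENNReal.ofReal_toReal hBne, ← ENNReal.ofReal_mul ENNReal.toReal_nonneg]
  rw [← ENNReal.ofReal_one]
  refine ENNReal.ofReal_le_ofReal ?_
  rw [← div_eq_mul_inv, div_le_one hCpos]
  unfold dC
  linarith

lemma le_dualDist {d : ℕ} {δ : ℝ} {k : ℝ≥0∞} {α β : Measure (EuclideanSpace ℝ (Fin d))}
    {g : EuclideanSpace ℝ (Fin d) → ℝ} (h1 : Measurable g) (h2 : ∃ M, ∀ x, |g x| ≤ M)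
    (h3 : tildeSobNorm d δ k g ≤ 1) :
    ENNReal.ofReal |∫ x, g x ∂α - ∫ x, g x ∂β| ≤ dualDist d δ k α β := by
  have h := le_iSup (fun f => ⨆ (_ : Measurable f) (_ : ∃ M, ∀ x, |f x| ≤ M)
    (_ : tildeSobNorm d δ k f ≤ 1), ENNReal.ofReal |∫ x, f x ∂α - ∫ x, f x ∂β|) g
  rwa [iSup_pos h1, iSup_pos h2, iSup_pos h3] at h

lemma le_dualNorm {d : ℕ} {δ : ℝ} {k : ℝ≥0∞} {α : Measure (EuclideanSpace ℝ (Fin d))}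
    {g : EuclideanSpace ℝ (Fin d) → ℝ} (h1 : Measurable g) (h2 : ∃ M, ∀ x, |g x| ≤ M)
    (h3 : tildeSobNorm d δ k g ≤ 1) :
    ENNReal.ofReal |∫ x, g x ∂α| ≤ dualNorm d δ k α := by
  have h := le_iSup (fun f => ⨆ (_ : Measurable f) (_ : ∃ M, ∀ x, |f x| ≤ M)
    (_ : tildeSobNorm d δ k f ≤ 1), ENNReal.ofReal |∫ x, f x ∂α|) g
  rwa [iSup_pos h1, iSup_pos h2, iSup_pos h3] at h

lemma dist_est (d : ℕ) (δ : ℝ) (k : ℝ≥0∞) (hδ : 0 ≤ δ)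
    (α β : Measure (EuclideanSpace ℝ (Fin d)))
    {f : EuclideanSpace ℝ (Fin d) → ℝ} (hfm : Measurable f) (hf : ∀ x, |f x| ≤ 1)
    {r : ℝ} (hr : 0 ≤ r) (hle : dualDist d δ k α β ≤ ENNReal.ofReal r) :
    |∫ x, f x ∂α - ∫ x, f x ∂β| ≤ dC d k * r := by
  have hCpos := dC_pos d k
  set g : EuclideanSpace ℝ (Fin d) → ℝ := fun x => (dC d k)⁻¹ * f x with hg
  have hgm : Measurable g := hfm.const_mul _
  have hgb : ∀ x, |g x| ≤ (dC d k)⁻¹ := fun x => by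
    rw [hg, abs_mul, abs_of_pos (inv_pos.mpr hCpos)]
    calc (dC d k)⁻¹ * |f x| ≤ (dC d k)⁻¹ * 1 :=
          mul_le_mul_of_nonneg_left (hf x) (inv_pos.mpr hCpos).le
      _ = (dC d k)⁻¹ := mul_one _
  have hsob : tildeSobNorm d δ k g ≤ 1 := sob_le_one d δ k hδ hgb
  have hkey : ∫ x, g x ∂α - ∫ x, g x ∂β = (dC d k)⁻¹ * (∫ x, f x ∂α - ∫ x, f x ∂β) := by
    rw [hg]
    simp only [integral_const_mul]
    ring
  have h1 : ENNReal.ofReal |∫ x, g x ∂α - ∫ x, g x ∂β| ≤ ENNReal.ofReal r :=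
    (le_dualDist hgm ⟨_, hgb⟩ hsob).trans hle
  rw [hkey, abs_mul, abs_of_pos (inv_pos.mpr hCpos)] at h1
  have h2 := (ENNReal.ofReal_le_ofReal_iff hr).mp h1
  calc |∫ x, f x ∂α - ∫ x, f x ∂β|
      = dC d k * ((dC d k)⁻¹ * |∫ x, f x ∂α - ∫ x, f x ∂β|) := by
        field_simp
    _ ≤ dC d k * r := mul_le_mul_of_nonneg_left h2 hCpos.le

lemma toReal_compl {α : Type*} [MeasurableSpace α] (ρ : Measure α) [IsProbabilityMeasure ρ]
    {s : Set α} (hs : MeasurableSet s) : (ρ sᶜ).toReal = 1 - (ρ s).toReal := by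
  rw [prob_compl_eq_one_sub hs, ENNReal.toReal_sub_of_le prob_le_one ENNReal.one_ne_top,
    ENNReal.toReal_one]

/-- Completeness of `(𝒫_{δ,k*}, ‖·‖_{δ,k*})`: any Cauchy sequence of probability measures
with finite `‖·‖_{δ,k*}`-norm converges in the `‖·‖_{δ,k*}`-distance to a probability
measure with finite norm. -/
theorem stmt6 (d : ℕ) (δ : ℝ) (hδ : 0 ≤ δ) (k : ℝ≥0∞) (hk : 1 ≤ k)
    (μ : ℕ → Measure (EuclideanSpace ℝ (Fin d)))
    (hprob : ∀ n, IsProbabilityMeasure (μ n))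
    (hfin : ∀ n, dualNorm d δ k (μ n) ≠ ⊤)
    (hcauchy : ∀ ε : ℝ≥0∞, 0 < ε → ∃ N, ∀ m ≥ N, ∀ n ≥ N,
      dualDist d δ k (μ m) (μ n) < ε) :
    ∃ ν : Measure (EuclideanSpace ℝ (Fin d)), IsProbabilityMeasure ν ∧
      dualNorm d δ k ν ≠ ⊤ ∧
      Filter.Tendsto (fun n => dualDist d δ k (μ n) ν) Filter.atTop (nhds 0) := by
  classical
  have hCpos := dC_pos d k
  -- the dominating measure π
  set π : Measure (EuclideanSpace ℝ (Fin d)) :=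
    Measure.sum (fun n => ((2:ℝ≥0∞)⁻¹) ^ (n + 1) • μ n) with hπ
  have hπs : ∀ s : Set (EuclideanSpace ℝ (Fin d)), MeasurableSet s →
      π s = ∑' n, ((2:ℝ≥0∞)⁻¹) ^ (n + 1) * μ n s := by
    intro s hs
    rw [hπ, Measure.sum_apply _ hs]
    simp [Measure.smul_apply, smul_eq_mul]
  have hπuniv : π Set.univ = 1 := by
    rw [hπs _ MeasurableSet.univ]
    have h1 : ∀ n : ℕ, ((2:ℝ≥0∞)⁻¹) ^ (n + 1) * μ n Set.univ = 2⁻¹ * (2⁻¹) ^ n := by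
      intro n
      haveI := hprob n
      rw [measure_univ, mul_one, pow_succ, mul_comm]
    rw [tsum_congr h1, ENNReal.tsum_mul_left, ENNReal.tsum_geometric,
      ENNReal.one_sub_inv_two, inv_inv, ENNReal.inv_mul_cancel two_ne_zero ENNReal.ofNat_ne_top]
  haveI : IsProbabilityMeasure π := ⟨hπuniv⟩
  have hac : ∀ n, μ n ≪ π := by
    intro n
    refine Measure.AbsolutelyContinuous.mk fun s hs h0 => ?_
    rw [hπs s hs] at h0
    have := ENNReal.tsum_eq_zero.mp h0 n
    rcases mul_eq_zero.mp this with h | h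
    · exact absurd h (pow_ne_zero _ (by simp))
    · exact h
  -- densities
  set g : ℕ → EuclideanSpace ℝ (Fin d) → ℝ :=
    fun n x => ((μ n).rnDeriv π x).toReal with hgdef
  have hgm : ∀ n, Measurable (g n) := fun n =>
    (Measure.measurable_rnDeriv _ _).ennreal_toReal
  have hgnn : ∀ n x, 0 ≤ g n x := fun n x => ENNReal.toReal_nonneg
  have hgint : ∀ n, Integrable (g n) π := fun n => by
    haveI := hprob n
    exact Measure.integrable_toReal_rnDeriv
  have hgset : ∀ n (s : Set (EuclideanSpace ℝ (Fin d))),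
      ∫ x in s, g n x ∂π = (μ n s).toReal := fun n s => by
    haveI := hprob n
    exact Measure.setIntegral_toReal_rnDeriv (hac n) s
  have hμint : ∀ n (f : EuclideanSpace ℝ (Fin d) → ℝ),
      ∫ x, g n x * f x ∂π = ∫ x, f x ∂(μ n) := by
    intro n f
    haveI := hprob n
    haveI : (μ n).HaveLebesgueDecomposition π := Measure.haveLebesgueDecomposition_of_sigmaFinite _ _
    simpa [smul_eq_mul] using MeasureTheory.integral_rnDeriv_smul (hac n) (f := f)
  -- L¹ distance estimate from the dual distance
  have hL1 : ∀ m n : ℕ, ∀ r : ℝ, 0 ≤ r → dualDist d δ k (μ m) (μ n) ≤ ENNReal.ofReal r →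
      ∫ x, |g m x - g n x| ∂π ≤ 2 * (dC d k * r) := by
    intro m n r hr hle
    haveI := hprob m; haveI := hprob n
    set s : Set (EuclideanSpace ℝ (Fin d)) := {x | g n x ≤ g m x} with hsdef
    have hs : MeasurableSet s := measurableSet_le (hgm n) (hgm m)
    have habs : Integrable (fun x => |g m x - g n x|) π := by
      simpa using ((hgint m).sub (hgint n)).abs
    have hsplit : ∫ x, |g m x - g n x| ∂π
        = (∫ x in s, (g m x - g n x) ∂π) + ∫ x in sᶜ, (g n x - g m x) ∂π := by
      rw [← integral_add_compl hs habs]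
      congr 1
      · refine setIntegral_congr_fun hs fun x hx => ?_
        exact abs_of_nonneg (sub_nonneg.2 hx)
      · refine setIntegral_congr_fun hs.compl fun x hx => ?_
        have hxx : ¬ (g n x ≤ g m x) := hx
        rw [abs_of_nonpos (by push_neg at hxx; linarith)]
        ring
    have him : ∫ x in s, (g m x - g n x) ∂π = (μ m s).toReal - (μ n s).toReal := by
      rw [integral_sub ((hgint m).integrableOn) ((hgint n).integrableOn), hgset m s, hgset n s]
    have hic : ∫ x in sᶜ, (g n x - g m x) ∂π = (μ m s).toReal - (μ n s).toReal := by
      rw [integral_sub ((hgint n).integrableOn) ((hgint m).integrableOn), hgset n sᶜ,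
        hgset m sᶜ, toReal_compl (μ n) hs, toReal_compl (μ m) hs]
      ring
    have hindm : Measurable (s.indicator (1 : EuclideanSpace ℝ (Fin d) → ℝ)) :=
      measurable_one.indicator hs
    have hindb : ∀ x, |s.indicator (1 : EuclideanSpace ℝ (Fin d) → ℝ) x| ≤ 1 := by
      intro x
      by_cases hx : x ∈ s
      · simp [Set.indicator_of_mem hx]
      · simp [Set.indicator_of_notMem hx]
    have hind := dist_est d δ k hδ (μ m) (μ n) hindm hindb hr hle
    rw [integral_indicator_one hs, integral_indicator_one hs] at hind
    rw [hsplit, him, hic]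
    have : (μ m s).toReal - (μ n s).toReal ≤ dC d k * r :=
      (le_abs_self _).trans hind
    linarith
  -- the Cauchy sequence in L¹(π)
  set G : ℕ → (EuclideanSpace ℝ (Fin d) →₁[π] ℝ) :=
    fun n => MeasureTheory.Integrable.toL1 (g n) (hgint n) with hGdef
  have hGdist : ∀ m n : ℕ, dist (G m) (G n) = ∫ x, |g m x - g n x| ∂π := by
    intro m n
    rw [MeasureTheory.L1.dist_eq_integral_dist]
    refine integral_congr_ae ?_
    filter_upwards [MeasureTheory.Integrable.coeFn_toL1 (hgint m),
      MeasureTheory.Integrable.coeFn_toL1 (hgint n)] with x h1 h2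
    rw [h1, h2, Real.dist_eq]
  have hGcauchy : CauchySeq G := by
    rw [Metric.cauchySeq_iff]
    intro ε hε
    have hr : (0:ℝ) < ε / (4 * dC d k) := by positivity
    obtain ⟨N, hN⟩ := hcauchy (ENNReal.ofReal (ε / (4 * dC d k)))
      (ENNReal.ofReal_pos.mpr hr)
    refine ⟨N, fun m hm n hn => ?_⟩
    rw [hGdist m n]
    calc ∫ x, |g m x - g n x| ∂π ≤ 2 * (dC d k * (ε / (4 * dC d k))) :=
          hL1 m n _ hr.le (hN m hm n hn).le
      _ = ε / 2 := by field_simp; ring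
      _ < ε := by linarith
  obtain ⟨Glim, hGlim⟩ := cauchySeq_tendsto_of_complete hGcauchy
  set gl : EuclideanSpace ℝ (Fin d) → ℝ := ⇑Glim with hgl
  have hglm : Measurable gl := (MeasureTheory.Lp.stronglyMeasurable Glim).measurable
  have hglint : Integrable gl π := MeasureTheory.L1.integrable_coeFn Glim
  have hdistlim : Filter.Tendsto (fun n => ∫ x, |g n x - gl x| ∂π)
      Filter.atTop (nhds 0) := by
    have h := tendsto_iff_dist_tendsto_zero.mp hGlim
    refine h.congr fun n => ?_
    rw [MeasureTheory.L1.dist_eq_integral_dist]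
    refine integral_congr_ae ?_
    filter_upwards [MeasureTheory.Integrable.coeFn_toL1 (hgint n)] with x h1
    rw [h1, Real.dist_eq]
  -- the limit density is a.e. nonnegative
  have hglpos : 0 ≤ᵐ[π] gl := by
    have hint2 : Integrable (fun x => max (-gl x) 0) π := hglint.neg.pos_part
    have hle : ∀ n : ℕ, ∫ x, max (-gl x) 0 ∂π ≤ ∫ x, |g n x - gl x| ∂π := by
      intro n
      have habs : Integrable (fun x => |g n x - gl x|) π := by
        simpa using ((hgint n).sub hglint).abs
      refine integral_mono hint2 habs fun x => ?_
      refine max_le ?_ (abs_nonneg _)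
      have h1 : -gl x ≤ g n x - gl x := by have := hgnn n x; linarith
      exact h1.trans (le_abs_self _)
    have h0 : ∫ x, max (-gl x) 0 ∂π ≤ 0 :=
      ge_of_tendsto hdistlim (Filter.Eventually.of_forall hle)
    have hz : ∫ x, max (-gl x) 0 ∂π = 0 :=
      le_antisymm h0 (integral_nonneg fun x => le_max_right _ _)
    have hae := (integral_eq_zero_iff_of_nonneg (fun x => le_max_right _ _) hint2).mp hz
    filter_upwards [hae] with x hx
    simp only [Pi.zero_apply] at hx
    have h1 : -gl x ≤ 0 := by rw [← hx]; exact le_max_left _ _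
    simp only [Pi.zero_apply]
    linarith
  -- the limit measure
  set ν : Measure (EuclideanSpace ℝ (Fin d)) :=
    π.withDensity (fun x => (Real.toNNReal (gl x) : ℝ≥0∞)) with hν
  have hνint : ∀ f : EuclideanSpace ℝ (Fin d) → ℝ,
      ∫ x, f x ∂ν = ∫ x, gl x * f x ∂π := by
    intro f
    rw [hν, integral_withDensity_eq_integral_smul
      (show Measurable fun x => Real.toNNReal (gl x) from measurable_real_toNNReal.comp hglm) f]
    refine integral_congr_ae ?_
    filter_upwards [hglpos] with x hx
    rw [NNReal.smul_def, Real.coe_toNNReal _ hx, smul_eq_mul]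
  -- ∫ gl = 1
  have hgl1 : ∫ x, gl x ∂π = 1 := by
    have h1 : ∀ n : ℕ, ∫ x, g n x ∂π = 1 := by
      intro n
      haveI := hprob n
      rw [Measure.integral_toReal_rnDeriv (hac n), measureReal_def, measure_univ, ENNReal.toReal_one]
    have h2 : Filter.Tendsto (fun n => ∫ x, g n x ∂π) Filter.atTop
        (nhds (∫ x, gl x ∂π)) := by
      rw [tendsto_iff_dist_tendsto_zero]
      refine squeeze_zero (fun n => dist_nonneg) (fun n => ?_) hdistlim
      rw [Real.dist_eq, ← integral_sub (hgint n) hglint]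
      simpa [Real.norm_eq_abs] using
        norm_integral_le_integral_norm (f := fun x => g n x - gl x) (μ := π)
    simp only [h1] at h2
    exact tendsto_nhds_unique h2 tendsto_const_nhds
  have hν1 : IsProbabilityMeasure ν := by
    constructor
    rw [hν, withDensity_apply _ MeasurableSet.univ, Measure.restrict_univ]
    have heq : ∫⁻ x, (Real.toNNReal (gl x) : ℝ≥0∞) ∂π
        = ∫⁻ x, ENNReal.ofReal (gl x) ∂π := lintegral_congr fun x => rfl
    rw [heq, ← ofReal_integral_eq_lintegral_ofReal hglint hglpos, hgl1, ENNReal.ofReal_one]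
  haveI := hν1
  -- convergence of integrals of bounded measurable functions
  have hconv : ∀ (f : EuclideanSpace ℝ (Fin d) → ℝ) (M : ℝ), Measurable f →
      (∀ x, |f x| ≤ M) →
      Filter.Tendsto (fun n => ∫ x, f x ∂(μ n)) Filter.atTop (nhds (∫ x, f x ∂ν)) := by
    intro f M hfm hfb
    have hM0 : 0 ≤ M := (abs_nonneg (f 0)).trans (hfb 0)
    rw [tendsto_iff_dist_tendsto_zero]
    have hbl : Filter.Tendsto (fun n => M * ∫ x, |g n x - gl x| ∂π)
        Filter.atTop (nhds 0) := by
      simpa using hdistlim.const_mul M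
    refine squeeze_zero (fun n => dist_nonneg) (fun n => ?_) hbl
    have hfn : ∀ (h : EuclideanSpace ℝ (Fin d) → ℝ), Integrable h π →
        Integrable (fun x => h x * f x) π := by
      intro h hh
      have := hh.bdd_mul hfm.aestronglyMeasurable
        (c := M) (Filter.Eventually.of_forall fun x => by rw [Real.norm_eq_abs]; exact hfb x)
      exact this.congr (Filter.Eventually.of_forall fun x => mul_comm _ _)
    have h1 : ∫ x, f x ∂(μ n) = ∫ x, g n x * f x ∂π := (hμint n f).symm
    have h2 : ∫ x, f x ∂ν = ∫ x, gl x * f x ∂π := hνint f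
    rw [Real.dist_eq, h1, h2, ← integral_sub (hfn _ (hgint n)) (hfn _ hglint)]
    have habsint : Integrable (fun x => |g n x - gl x| * M) π := by
      have : Integrable (fun x => |g n x - gl x|) π := by
        simpa using ((hgint n).sub hglint).abs
      exact this.mul_const M
    calc |∫ x, (g n x * f x - gl x * f x) ∂π|
        ≤ ∫ x, |g n x - gl x| * M ∂π := by
          rw [← Real.norm_eq_abs]
          refine norm_integral_le_of_norm_le habsint
            (Filter.Eventually.of_forall fun x => ?_)
          rw [Real.norm_eq_abs]
          calc |g n x * f x - gl x * f x| = |g n x - gl x| * |f x| := by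
                rw [← abs_mul]; ring_nf
            _ ≤ |g n x - gl x| * M :=
                mul_le_mul_of_nonneg_left (hfb x) (abs_nonneg _)
      _ = M * ∫ x, |g n x - gl x| ∂π := by rw [integral_mul_const]; ring
  -- quantitative convergence in the dual distance
  have hDD : ∀ r : ℝ, 0 < r → ∃ N, ∀ m ≥ N, dualDist d δ k (μ m) ν ≤ ENNReal.ofReal r := by
    intro r hr
    obtain ⟨N, hN⟩ := hcauchy (ENNReal.ofReal (r / 2))
      (ENNReal.ofReal_pos.mpr (by positivity))
    refine ⟨N, fun m hm => ?_⟩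
    refine iSup_le fun f => iSup_le fun hfm => iSup_le fun hfb => iSup_le fun hsob => ?_
    obtain ⟨M, hM⟩ := hfb
    rw [← ENNReal.ofReal_toReal (a := ENNReal.ofReal r) ENNReal.ofReal_ne_top]
    refine ENNReal.ofReal_le_ofReal ?_
    rw [ENNReal.toReal_ofReal hr.le]
    have hlim : Filter.Tendsto (fun n => |∫ x, f x ∂(μ m) - ∫ x, f x ∂(μ n)|)
        Filter.atTop (nhds |∫ x, f x ∂(μ m) - ∫ x, f x ∂ν|) :=
      (tendsto_const_nhds.sub (hconv f M hfm hM)).abs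
    have hub : ∀ᶠ n in Filter.atTop, |∫ x, f x ∂(μ m) - ∫ x, f x ∂(μ n)| ≤ r / 2 := by
      filter_upwards [Filter.eventually_ge_atTop N] with n hn
      have h1 : ENNReal.ofReal |∫ x, f x ∂(μ m) - ∫ x, f x ∂(μ n)|
          ≤ ENNReal.ofReal (r / 2) := (le_dualDist hfm ⟨M, hM⟩ hsob).trans (hN m hm n hn).le
      exact (ENNReal.ofReal_le_ofReal_iff (by positivity)).mp h1
    have := le_of_tendsto hlim hub
    linarith
  refine ⟨ν, hν1, ?_, ?_⟩
  · -- finiteness of the dual norm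
    obtain ⟨N1, hN1⟩ := hDD 1 one_pos
    have hle : dualNorm d δ k ν ≤ dualNorm d δ k (μ N1) + ENNReal.ofReal 1 := by
      refine iSup_le fun f => iSup_le fun h1 => iSup_le fun h2 => iSup_le fun h3 => ?_
      have key : ENNReal.ofReal |∫ x, f x ∂ν|
          ≤ ENNReal.ofReal |∫ x, f x ∂(μ N1)|
            + ENNReal.ofReal |∫ x, f x ∂(μ N1) - ∫ x, f x ∂ν| := by
        rw [← ENNReal.ofReal_add (abs_nonneg _) (abs_nonneg _)]
        refine ENNReal.ofReal_le_ofReal ?_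
        have := abs_sub_abs_le_abs_sub (∫ x, f x ∂ν) (∫ x, f x ∂(μ N1))
        have h4 := abs_sub_comm (∫ x, f x ∂ν) (∫ x, f x ∂(μ N1))
        linarith [abs_nonneg (∫ x, f x ∂ν - ∫ x, f x ∂(μ N1))]
      refine key.trans (add_le_add ?_ ?_)
      · exact le_dualNorm h1 h2 h3
      · exact (le_dualDist h1 h2 h3).trans (hN1 N1 le_rfl)
    exact ne_top_of_le_ne_top
      (ENNReal.add_ne_top.mpr ⟨hfin N1, ENNReal.ofReal_ne_top⟩) hle
  · -- convergence in the dual distance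
    rw [ENNReal.tendsto_atTop_zero]
    intro ε hε
    have hmin_ne : (min ε 1) ≠ ⊤ := ne_top_of_le_ne_top ENNReal.one_ne_top (min_le_right _ _)
    have hmin_pos : 0 < (min ε 1).toReal :=
      ENNReal.toReal_pos (lt_min hε zero_lt_one).ne' hmin_ne
    obtain ⟨N, hN⟩ := hDD (min ε 1).toReal hmin_pos
    refine ⟨N, fun n hn => ?_⟩
    refine (hN n hn).trans ?_
    rw [ENNReal.ofReal_toReal hmin_ne]
    exact min_le_left _ _
end
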